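/- Let g : ℝⁿ → ℝ ∪ {+∞} be proper closed convex, f : ℝⁿ → ℝ convex differentiable with L-Lipschitz gradient, and h = f + g. Define B_L(y) = (I + ∂g/L)^{-1}(y − ∇f(y)/L), i.e., B_L(y) = argmin_x g(x) + (L/2)‖x − (y − ∇f(y)/L)‖². Then for all x, y ∈ ℝⁿ, h(x) − h(B_L(y)) ≥ (L/2)‖B_L(y) − y‖² + L⟨y − x, B_L(y) − y⟩. -/

import Mathlib

open scoped RealInnerProductSpace
open Set

variable {n : ℕ}

local notation "E" => EuclideanSpace ℝ (Fin n)

lemma lineDeriv' {f : E → ℝ} {f' : E → E}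
    (hgrad : ∀ x, HasGradientAt f (f' x) x)
    (y d : E) (t : ℝ) :
    HasDerivAt (fun t : ℝ => f (y + t • d)) ⟪f' (y + t • d), d⟫ t := by
  have h1 : HasDerivAt (fun t : ℝ => y + t • d) d t := by
    simpa using ((hasDerivAt_id t).smul_const d).const_add y
  have h2 := (hgrad (y + t • d)).hasFDerivAt
  have h3 := h2.comp_hasDerivAt t h1
  simpa [InnerProductSpace.toDual_apply_apply, Function.comp_def] using h3

lemma conv_grad' {f : E → ℝ} {f' : E → E}
    (hfconv : ConvexOn ℝ Set.univ f)
    (hgrad : ∀ x, HasGradientAt f (f' x) x)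
    (x y : E) : f y + ⟪f' y, x - y⟫ ≤ f x := by
  have hφ : ConvexOn ℝ Set.univ (fun t : ℝ => f (y + t • (x - y))) := by
    have h := hfconv.comp_affineMap (AffineMap.lineMap y x : ℝ →ᵃ[ℝ] E)
    have heq : (fun t : ℝ => f (y + t • (x - y))) = f ∘ (AffineMap.lineMap y x : ℝ →ᵃ[ℝ] E) := by
      funext t
      simp only [Function.comp_apply, AffineMap.coe_lineMap, AffineMap.lineMap_apply,
        vadd_eq_add, vsub_eq_sub]
      congr 1
      abel
    rw [heq]
    simpa using h
  have hd : HasDerivAt (fun t : ℝ => f (y + t • (x - y))) ⟪f' y, x - y⟫ 0 := by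
    simpa using lineDeriv' hgrad y (x - y) 0
  have hsl := hφ.le_slope_of_hasDerivAt (Set.mem_univ (0:ℝ)) (Set.mem_univ (1:ℝ))
    one_pos hd
  rw [slope_def_field] at hsl
  have h1 : y + (1:ℝ) • (x - y) = x := by module
  have h0 : y + (0:ℝ) • (x - y) = y := by module
  rw [h1, h0, sub_zero, div_one] at hsl
  linarith

lemma descent' {f : E → ℝ} {f' : E → E} {L : ℝ} (hL : 0 < L)
    (hgrad : ∀ x, HasGradientAt f (f' x) x)
    (hlip : ∀ x y, ‖f' x - f' y‖ ≤ L * ‖x - y‖)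
    (y p : E) :
    f p ≤ f y + ⟪f' y, p - y⟫ + L / 2 * ‖p - y‖ ^ 2 := by
  set d := p - y with hd
  set ψ : ℝ → ℝ := fun t => f (y + t • d) - t * ⟪f' y, d⟫ - L / 2 * t ^ 2 * ‖d‖ ^ 2 with hψ
  have hψd : ∀ t : ℝ, HasDerivAt ψ (⟪f' (y + t • d), d⟫ - ⟪f' y, d⟫ - L * t * ‖d‖ ^ 2) t := by
    intro t
    have h1 := lineDeriv' hgrad y d t
    have h2 : HasDerivAt (fun t : ℝ => t * ⟪f' y, d⟫) ⟪f' y, d⟫ t := by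
      simpa using (hasDerivAt_id t).mul_const ⟪f' y, d⟫
    have h3 : HasDerivAt (fun t : ℝ => L / 2 * t ^ 2 * ‖d‖ ^ 2) (L * t * ‖d‖ ^ 2) t := by
      have := ((hasDerivAt_pow 2 t).const_mul (L / 2)).mul_const (‖d‖ ^ 2)
      refine this.congr_deriv ?_
      rw [show (2:ℕ) - 1 = 1 from rfl]
      push_cast
      ring
    exact (h1.sub h2).sub h3
  have hanti : AntitoneOn ψ (Set.Icc (0:ℝ) 1) := by
    apply antitoneOn_of_deriv_nonpos (convex_Icc 0 1)
    · exact (continuous_iff_continuousAt.2 fun t => (hψd t).continuousAt).continuousOn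
    · intro t ht
      exact (hψd t).differentiableAt.differentiableWithinAt
    · intro t ht
      rw [interior_Icc] at ht
      rw [(hψd t).deriv]
      have h4 : ⟪f' (y + t • d) - f' y, d⟫ ≤ ‖f' (y + t • d) - f' y‖ * ‖d‖ :=
        real_inner_le_norm _ _
      have h5 : ‖f' (y + t • d) - f' y‖ ≤ L * (t * ‖d‖) := by
        have := hlip (y + t • d) y
        simpa [norm_smul, abs_of_pos ht.1, mul_assoc] using this
      have h6 : ⟪f' (y + t • d) - f' y, d⟫ = ⟪f' (y + t • d), d⟫ - ⟪f' y, d⟫ := by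
        rw [inner_sub_left]
      nlinarith [norm_nonneg d, norm_nonneg (f' (y + t • d) - f' y), ht.1.le]
  have hkey := hanti (Set.mem_Icc.2 ⟨le_refl 0, zero_le_one⟩)
    (Set.mem_Icc.2 ⟨zero_le_one, le_refl 1⟩) zero_le_one
  simp only [hψ, one_smul, zero_smul, add_zero, one_pow, mul_one, one_mul,
    zero_pow, mul_zero, zero_mul, sub_zero, ne_eq, OfNat.ofNat_ne_zero,
    not_false_eq_true] at hkey
  have hyp : y + d = p := by rw [hd]; abel
  rw [hyp] at hkey
  linarith

lemma prox_subgrad' {g : E → ℝ} (hgconv : ConvexOn ℝ Set.univ g) {L : ℝ} (hL : 0 < L)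
    (u p : E)
    (hmin : ∀ z, g p + L / 2 * ‖p - u‖ ^ 2 ≤ g z + L / 2 * ‖z - u‖ ^ 2)
    (x : E) : g p + L * ⟪u - p, x - p⟫ ≤ g x := by
  have key : ∀ t : ℝ, 0 < t → t ≤ 1 →
      L * ⟪u - p, x - p⟫ + g p - g x ≤ L / 2 * ‖x - p‖ ^ 2 * t := by
    intro t ht0 ht1
    have hz := hmin (p + t • (x - p))
    have hconv : g ((1 - t) • p + t • x) ≤ (1 - t) * g p + t * g x :=
      hgconv.2 (Set.mem_univ p) (Set.mem_univ x) (by linarith) ht0.le (by ring)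
    have hzc : (1 - t) • p + t • x = p + t • (x - p) := by module
    rw [hzc] at hconv
    have hnorm : ‖p + t • (x - p) - u‖ ^ 2
        = ‖p - u‖ ^ 2 + 2 * (t * ⟪p - u, x - p⟫) + t ^ 2 * ‖x - p‖ ^ 2 := by
      have he : p + t • (x - p) - u = (p - u) + t • (x - p) := by module
      rw [he, norm_add_sq_real, real_inner_smul_right, norm_smul]
      simp [mul_pow, sq_abs]
    rw [hnorm] at hz
    have hflip : ⟪u - p, x - p⟫ = -⟪p - u, x - p⟫ := by
      rw [show u - p = -(p - u) by abel, inner_neg_left]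
    have h7 : 0 ≤ t * ((g x - g p) - L * ⟪u - p, x - p⟫ + L / 2 * t * ‖x - p‖ ^ 2) := by
      rw [hflip]
      nlinarith [hz, hconv]
    have h8 := (mul_nonneg_iff_of_pos_left ht0).mp h7
    linarith
  by_contra hcon
  push_neg at hcon
  set A := L * ⟪u - p, x - p⟫ + g p - g x with hA
  have hApos : 0 < A := by rw [hA]; linarith
  set K := L / 2 * ‖x - p‖ ^ 2 with hK
  have hKnn : 0 ≤ K := by positivity
  set t0 := min 1 (A / (2 * (K + 1))) with ht0
  have h1 : 0 < t0 := lt_min one_pos (by positivity)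
  have h2 : t0 ≤ 1 := min_le_left _ _
  have h3 := key t0 h1 h2
  have h4 : K * t0 ≤ (K + 1) * (A / (2 * (K + 1))) := by
    apply mul_le_mul (by linarith) (min_le_right _ _) h1.le (by linarith)
  have h5 : (K + 1) * (A / (2 * (K + 1))) = A / 2 := by
    field_simp
  rw [h5] at h4
  linarith

/-- Fundamental proximal gradient inequality (Beck–Teboulle). Here the proper closed
convex function `g` is taken real-valued (convex and continuous, hence closed), and
`B y` is the proximal-gradient point, i.e. the minimizer of
`x ↦ g x + (L/2)‖x - (y - ∇f(y)/L)‖²`. -/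
theorem prox_grad_inequality {n : ℕ}
    (f g : EuclideanSpace ℝ (Fin n) → ℝ)
    (f' : EuclideanSpace ℝ (Fin n) → EuclideanSpace ℝ (Fin n)) (L : ℝ) (hL : 0 < L)
    (hgconv : ConvexOn ℝ Set.univ g) (hgcont : Continuous g)
    (hfconv : ConvexOn ℝ Set.univ f)
    (hgrad : ∀ x, HasGradientAt f (f' x) x)
    (hlip : ∀ x y, ‖f' x - f' y‖ ≤ L * ‖x - y‖)
    (B : EuclideanSpace ℝ (Fin n) → EuclideanSpace ℝ (Fin n))
    (hB : ∀ y, IsMinOn (fun x => g x + L / 2 * ‖x - (y - L⁻¹ • f' y)‖ ^ 2)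
      Set.univ (B y)) :
    ∀ x y, (f x + g x) - (f (B y) + g (B y)) ≥
      L / 2 * ‖B y - y‖ ^ 2 + L * ⟪y - x, B y - y⟫ := by
  intro x y
  set p := B y with hp
  set u := y - L⁻¹ • f' y with hu
  have hmin : ∀ z, g p + L / 2 * ‖p - u‖ ^ 2 ≤ g z + L / 2 * ‖z - u‖ ^ 2 := by
    intro z
    exact (hB y) (Set.mem_univ z)
  have hsub := prox_subgrad' hgconv hL u p hmin x
  have hcg := conv_grad' hfconv hgrad x y
  have hdes := descent' hL hgrad hlip y p
  have hinner : L * ⟪u - p, x - p⟫ = L * ⟪y - p, x - p⟫ - ⟪f' y, x - p⟫ := by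
    have he : u - p = (y - p) - L⁻¹ • f' y := by rw [hu]; abel
    rw [he, inner_sub_left, real_inner_smul_left, mul_sub, ← mul_assoc,
      mul_inv_cancel₀ hL.ne', one_mul]
  have I1 : ⟪f' y, x - p⟫ = ⟪f' y, x - y⟫ - ⟪f' y, p - y⟫ := by
    rw [← inner_sub_right]
    congr 1
    abel
  have I2 : ⟪y - p, x - p⟫ = ⟪y - x, p - y⟫ + ‖p - y‖ ^ 2 := by
    have e1 : x - p = (x - y) + (y - p) := by abel
    have e2 : ⟪y - x, p - y⟫ = ⟪y - p, x - y⟫ := by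
      rw [show y - x = -(x - y) by abel, show p - y = -(y - p) by abel,
        inner_neg_neg, real_inner_comm]
    rw [e1, inner_add_right, e2, real_inner_self_eq_norm_sq, ← norm_sub_rev p y]
  rw [hinner, I1, I2] at hsub
  linarith
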